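/- Define F : ℝ → ℝ by F(α) = 4√(1+α) + 2√α if α ≤ α₀, F(α) = 4 + 2√(2α) if α₀ < α < 1/2, and F(α) = 2√(6(1+α)) if α ≥ 1/2, where α₀ = (688 − 480√2)/49. Then F has derivative 2 at the point 1/2 (i.e., HasDerivAt F 2 (1/2)), but the derivative function α ↦ deriv F α is not differentiable at 1/2. -/

import Mathlib

open Real Filter Set Topology

/-- The minimal ℓ¹ double bubble perimeter as a function of the area ratio `α`
(Theorem 1.1, part II). -/
noncomputable def doubleBubblePerimeter (α : ℝ) : ℝ :=
  if α ≤ (688 - 480 * Real.sqrt 2) / 49 then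
    4 * Real.sqrt (1 + α) + 2 * Real.sqrt α
  else if α < 1 / 2 then 4 + 2 * Real.sqrt (2 * α)
  else 2 * Real.sqrt (6 * (1 + α))

namespace DBaux

noncomputable def a0 : ℝ := (688 - 480 * Real.sqrt 2) / 49
noncomputable def g (α : ℝ) : ℝ := 4 + 2 * Real.sqrt (2 * α)
noncomputable def h (α : ℝ) : ℝ := 2 * Real.sqrt (6 * (1 + α))
noncomputable def G (α : ℝ) : ℝ := 2 * (Real.sqrt (2 * α))⁻¹
noncomputable def H (α : ℝ) : ℝ := 6 * (Real.sqrt (6 * (1 + α)))⁻¹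

lemma sqrt2_bounds : (1.4 : ℝ) < Real.sqrt 2 ∧ Real.sqrt 2 < 1.42 := by
  constructor
  · have := Real.sq_sqrt (by norm_num : (2:ℝ) ≥ 0)
    nlinarith [Real.sqrt_nonneg 2]
  · have := Real.sq_sqrt (by norm_num : (2:ℝ) ≥ 0)
    nlinarith [Real.sqrt_nonneg 2]

lemma a0_pos : 0 < a0 := by
  have h := sqrt2_bounds.2
  unfold a0; nlinarith

lemma a0_lt : a0 < 1 / 2 := by
  have h := sqrt2_bounds.1
  unfold a0; nlinarith

lemma F_eq_g {α : ℝ} (h1 : a0 < α) (h2 : α < 1 / 2) :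
    doubleBubblePerimeter α = g α := by
  unfold doubleBubblePerimeter
  rw [if_neg (show ¬ α ≤ (688 - 480 * Real.sqrt 2) / 49 from not_le.2 h1), if_pos h2]; rfl

lemma F_eq_h {α : ℝ} (h2 : 1 / 2 ≤ α) :
    doubleBubblePerimeter α = h α := by
  unfold doubleBubblePerimeter
  rw [if_neg (show ¬ α ≤ (688 - 480 * Real.sqrt 2) / 49 from
        not_le.2 (lt_of_lt_of_le a0_lt h2)), if_neg (not_lt.2 h2)]; rfl

lemma sqrt_one' : Real.sqrt (2 * (1/2 : ℝ)) = 1 := by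
  norm_num

lemma sqrt_nine : Real.sqrt (6 * (1 + (1/2 : ℝ))) = 3 := by
  rw [show (6 : ℝ) * (1 + 1/2) = 3 ^ 2 by norm_num, Real.sqrt_sq (by norm_num)]

lemma hasDerivAt_g {α : ℝ} (hα : 0 < α) : HasDerivAt g (G α) α := by
  have h1 : (2 : ℝ) * α ≠ 0 := by positivity
  have hin : HasDerivAt (fun x : ℝ => 2 * x) 2 α := by
    simpa using (hasDerivAt_id α).const_mul 2
  have := ((Real.hasDerivAt_sqrt h1).comp α hin).const_mul 2
  have := this.const_add 4
  refine this.congr_deriv ?_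
  have hs : Real.sqrt (2 * α) ≠ 0 := by
    positivity
  unfold G; field_simp

lemma hasDerivAt_h {α : ℝ} (hα : 0 < α) : HasDerivAt h (H α) α := by
  have h1 : (6 : ℝ) * (1 + α) ≠ 0 := by positivity
  have hin : HasDerivAt (fun x : ℝ => 6 * (1 + x)) 6 α := by
    simpa using ((hasDerivAt_id α).const_add 1).const_mul 6
  have := ((Real.hasDerivAt_sqrt h1).comp α hin).const_mul 2
  refine this.congr_deriv ?_
  have hs : Real.sqrt (6 * (1 + α)) ≠ 0 := by positivity
  unfold H; field_simp

lemma G_half : G (1/2) = 2 := by unfold G; rw [sqrt_one']; norm_num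

lemma H_half : H (1/2) = 2 := by unfold H; rw [sqrt_nine]; norm_num

lemma hasDerivAt_G : HasDerivAt G (-2) (1/2) := by
  have h1 : (2 : ℝ) * (1/2) ≠ 0 := by norm_num
  have hin : HasDerivAt (fun x : ℝ => 2 * x) 2 (1/2 : ℝ) := by
    simpa using (hasDerivAt_id (1/2 : ℝ)).const_mul 2
  have hs := (Real.hasDerivAt_sqrt h1).comp (1/2 : ℝ) hin
  simp only [Function.comp_def] at hs
  have hne : Real.sqrt (2 * (1/2 : ℝ)) ≠ 0 := by rw [sqrt_one']; norm_num
  have := (hs.inv hne).const_mul 2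
  refine this.congr_deriv ?_
  rw [sqrt_one']; norm_num

lemma hasDerivAt_H : HasDerivAt H (-2/3) (1/2) := by
  have h1 : (6 : ℝ) * (1 + 1/2) ≠ 0 := by norm_num
  have hin : HasDerivAt (fun x : ℝ => 6 * (1 + x)) 6 (1/2 : ℝ) := by
    simpa using ((hasDerivAt_id (1/2 : ℝ)).const_add 1).const_mul 6
  have hs := (Real.hasDerivAt_sqrt h1).comp (1/2 : ℝ) hin
  simp only [Function.comp_def] at hs
  have hne : Real.sqrt (6 * (1 + (1/2 : ℝ))) ≠ 0 := by rw [sqrt_nine]; norm_num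
  have := (hs.inv hne).const_mul 6
  refine this.congr_deriv ?_
  rw [sqrt_nine]; norm_num

lemma F_half : doubleBubblePerimeter (1/2) = 6 := by
  rw [F_eq_h le_rfl]; unfold h; rw [sqrt_nine]; norm_num

lemma g_half : g (1/2) = 6 := by unfold g; rw [sqrt_one']; norm_num

/-- Main derivative claim. -/
lemma hasDerivAt_F : HasDerivAt doubleBubblePerimeter 2 (1/2) := by
  have hg2 : HasDerivAt g 2 (1/2) := by
    have := hasDerivAt_g (show (0:ℝ) < 1/2 by norm_num); rwa [G_half] at this
  have hh2 : HasDerivAt h 2 (1/2) := by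
    have := hasDerivAt_h (show (0:ℝ) < 1/2 by norm_num); rwa [H_half] at this
  have hIoi : Ioi a0 ∈ 𝓝 (1/2 : ℝ) := Ioi_mem_nhds a0_lt
  have left : HasDerivWithinAt doubleBubblePerimeter 2 (Iic (1/2)) (1/2) := by
    have hev : doubleBubblePerimeter =ᶠ[𝓝[Iic (1/2)] (1/2)] g := by
      filter_upwards [mem_nhdsWithin_of_mem_nhds hIoi, self_mem_nhdsWithin] with x hx1 hx2
      rcases lt_or_eq_of_le (mem_Iic.1 hx2) with hlt | heq
      · exact F_eq_g hx1 hlt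
      · rw [heq, F_half, g_half]
    exact hg2.hasDerivWithinAt.congr_of_eventuallyEq hev (F_half.trans g_half.symm)
  have right : HasDerivWithinAt doubleBubblePerimeter 2 (Ici (1/2)) (1/2) := by
    have hev : doubleBubblePerimeter =ᶠ[𝓝[Ici (1/2)] (1/2)] h := by
      filter_upwards [self_mem_nhdsWithin] with x hx
      exact F_eq_h hx
    exact hh2.hasDerivWithinAt.congr_of_eventuallyEq hev (F_eq_h le_rfl)
  have := left.union right
  rw [Iic_union_Ici] at this
  rwa [hasDerivWithinAt_univ] at this

lemma deriv_F_left {x : ℝ} (h1 : a0 < x) (h2 : x < 1/2) :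
    deriv doubleBubblePerimeter x = G x := by
  have hev : doubleBubblePerimeter =ᶠ[𝓝 x] g := by
    filter_upwards [Ioo_mem_nhds h1 h2] with y hy
    exact F_eq_g hy.1 hy.2
  rw [hev.deriv_eq]
  exact (hasDerivAt_g (lt_trans a0_pos h1)).deriv

lemma deriv_F_right {x : ℝ} (h2 : (1:ℝ)/2 < x) :
    deriv doubleBubblePerimeter x = H x := by
  have hev : doubleBubblePerimeter =ᶠ[𝓝 x] h := by
    filter_upwards [Ioi_mem_nhds h2] with y hy
    exact F_eq_h (le_of_lt hy)
  rw [hev.deriv_eq]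
  exact (hasDerivAt_h (by linarith)).deriv

lemma deriv_F_half : deriv doubleBubblePerimeter (1/2) = 2 := hasDerivAt_F.deriv

lemma not_diff : ¬ DifferentiableAt ℝ (deriv doubleBubblePerimeter) (1 / 2) := by
  intro hd
  set d := deriv (deriv doubleBubblePerimeter) (1/2) with hdd
  have hD : HasDerivAt (deriv doubleBubblePerimeter) d (1/2) := hd.hasDerivAt
  have hIoi : Ioi a0 ∈ 𝓝 (1/2 : ℝ) := Ioi_mem_nhds a0_lt
  -- left side: deriv F = G eventually within Iic
  have hevL : deriv doubleBubblePerimeter =ᶠ[𝓝[Iic (1/2)] (1/2)] G := by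
    filter_upwards [mem_nhdsWithin_of_mem_nhds hIoi, self_mem_nhdsWithin] with x hx1 hx2
    rcases lt_or_eq_of_le (mem_Iic.1 hx2) with hlt | heq
    · exact deriv_F_left hx1 hlt
    · rw [heq, deriv_F_half, G_half]
  have hevR : deriv doubleBubblePerimeter =ᶠ[𝓝[Ici (1/2)] (1/2)] H := by
    filter_upwards [self_mem_nhdsWithin] with x hx
    rcases lt_or_eq_of_le (mem_Ici.1 hx) with hlt | heq
    · exact deriv_F_right hlt
    · rw [← heq, deriv_F_half, H_half]
  have hL : HasDerivWithinAt G d (Iic (1/2)) (1/2) :=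
    hD.hasDerivWithinAt.congr_of_eventuallyEq hevL.symm (by rw [G_half, deriv_F_half])
  have hR : HasDerivWithinAt H d (Ici (1/2)) (1/2) :=
    hD.hasDerivWithinAt.congr_of_eventuallyEq hevR.symm (by rw [H_half, deriv_F_half])
  have e1 : d = -2 :=
    (uniqueDiffOn_Iic (1/2 : ℝ) _ Set.self_mem_Iic).eq_deriv _ hL
      hasDerivAt_G.hasDerivWithinAt
  have e2 : d = -2/3 :=
    (uniqueDiffOn_Ici (1/2 : ℝ) _ Set.self_mem_Ici).eq_deriv _ hR
      hasDerivAt_H.hasDerivWithinAt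
  rw [e1] at e2; norm_num at e2

end DBaux

/-- **Second phase transition (Corollary 1.2).** The minimal perimeter function `F` has
derivative `2` at `α = 1/2`, but its derivative function is not differentiable there. -/
theorem second_phase_transition :
    HasDerivAt doubleBubblePerimeter 2 (1 / 2) ∧
      ¬ DifferentiableAt ℝ (deriv doubleBubblePerimeter) (1 / 2) :=
  ⟨DBaux.hasDerivAt_F, DBaux.not_diff⟩
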